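/- In the generalized Witt algebra W with basis {L_α : α ∈ Γ} and bracket [L_α, L_β] = (β−α)L_{α+β}, if v = Σ_ρ a(ρ) L_ρ ⊗ L_{−ρ} (finitely supported) satisfies L_1·v = 0 under the diagonal adjoint action, then (ρ+1)a(ρ) = (ρ−2)a(ρ−1) for all ρ ∈ Γ. -/

import Mathlib

open Finsupp TensorProduct

/-- Bracket of the generalized Witt algebra `[L_α, L_β] = (β−α)L_{α+β}`. -/
noncomputable def bkW {F : Type*} [Field F] (Γ : AddSubgroup F) :
    (Γ →₀ F) →ₗ[F] (Γ →₀ F) →ₗ[F] (Γ →₀ F) :=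
  Finsupp.lsum F fun α => LinearMap.toSpanSingleton F _
    (Finsupp.lsum F fun β =>
      (((β : F) - (α : F)) • Finsupp.lsingle (α + β) : F →ₗ[F] _))

/-- Diagonal adjoint action of `W` on `W ⊗ W`. -/
noncomputable def actW {F : Type*} [Field F] (Γ : AddSubgroup F) (x : Γ →₀ F) :
    ((Γ →₀ F) ⊗[F] (Γ →₀ F)) →ₗ[F] ((Γ →₀ F) ⊗[F] (Γ →₀ F)) :=
  LinearMap.rTensor _ (bkW Γ x) + LinearMap.lTensor _ (bkW Γ x)

noncomputable instance instZeroTensorW {F : Type*} [Field F] (Γ : AddSubgroup F) :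
    Zero ((Γ →₀ F) ⊗[F] (Γ →₀ F)) :=
  ⟨(inferInstance : AddCommMonoid ((Γ →₀ F) ⊗[F] (Γ →₀ F))).zero⟩

lemma bkW_single {F : Type*} [Field F] (Γ : AddSubgroup F) (α β : Γ) :
    bkW Γ (Finsupp.single α 1) (Finsupp.single β 1)
      = ((β : F) - (α : F)) • Finsupp.single (α + β) (1:F) := by
  simp [bkW, Finsupp.lsum_single, LinearMap.toSpanSingleton_apply]

lemma actW_single {F : Type*} [Field F] (Γ : AddSubgroup F) (α ρ τ : Γ) :
    finsuppTensorFinsupp' F Γ Γ (actW Γ (Finsupp.single α 1)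
        (Finsupp.single ρ (1:F) ⊗ₜ[F] Finsupp.single τ (1:F)))
      = ((ρ : F) - α) • Finsupp.single (α + ρ, τ) (1:F)
        + ((τ : F) - α) • Finsupp.single (ρ, α + τ) (1:F) := by
  simp only [actW, LinearMap.add_apply, LinearMap.rTensor_tmul, LinearMap.lTensor_tmul,
    bkW_single, ← TensorProduct.smul_tmul', TensorProduct.tmul_smul]
  rw [LinearEquiv.map_add, LinearEquiv.map_smul, LinearEquiv.map_smul]
  simp [finsuppTensorFinsupp'_single_tmul_single]

/-- if `v = Σ_ρ a(ρ) L_ρ ⊗ L_{−ρ}` (finitely supported) satisfies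
`L_1·v = 0` under the diagonal adjoint action of the generalized Witt algebra, then
`(ρ+1)a(ρ) = (ρ−2)a(ρ−1)` for all `ρ ∈ Γ`. -/
theorem L1_annihilates_diagonal_vector
    {F : Type*} [Field F] [CharZero F] (Γ : AddSubgroup F) (h1 : (1 : F) ∈ Γ)
    (a : Γ → F) (hfin : (Function.support a).Finite)
    (hv : actW Γ (Finsupp.single (⟨1, h1⟩ : Γ) (1 : F))
        (∑ᶠ ρ : Γ, a ρ • ((Finsupp.single ρ (1 : F)) ⊗ₜ[F]
          (Finsupp.single (-ρ) (1 : F)))) = 0) :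
    ∀ ρ : Γ, ((ρ : F) + 1) * a ρ = ((ρ : F) - 2) * a (ρ - ⟨1, h1⟩) := by
  classical
  intro σ
  set one : Γ := ⟨1, h1⟩ with hone_def
  have hone : ((one : Γ) : F) = 1 := rfl
  set S : Finset Γ := hfin.toFinset with hS_def
  have hSa : ∀ ρ : Γ, ρ ∉ S → a ρ = 0 := by
    intro ρ h
    by_contra ha
    exact h (hfin.mem_toFinset.mpr ha)
  have hsupp : Function.support
      (fun ρ : Γ => a ρ • ((Finsupp.single ρ (1:F)) ⊗ₜ[F] (Finsupp.single (-ρ) (1:F))))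
      ⊆ (S : Set Γ) := by
    intro ρ hρ
    simp only [Function.mem_support, ne_eq] at hρ
    by_contra h
    exact hρ (by rw [hSa ρ (by simpa using h), zero_smul])
  rw [finsum_eq_finset_sum_of_support_subset _ hsupp] at hv
  have expand : finsuppTensorFinsupp' F Γ Γ (actW Γ (Finsupp.single one (1:F))
      (∑ ρ ∈ S, a ρ • ((Finsupp.single ρ (1:F)) ⊗ₜ[F] (Finsupp.single (-ρ) (1:F)))))
      = ∑ ρ ∈ S, a ρ • (((ρ : F) - (one : F)) • Finsupp.single (one + ρ, -ρ) (1:F)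
        + (((-ρ : Γ) : F) - (one : F)) • Finsupp.single (ρ, one + -ρ) (1:F)) := by
    rw [map_sum (actW Γ (Finsupp.single one (1:F))) _ S]
    refine (map_sum (finsuppTensorFinsupp' F Γ Γ).toLinearMap _ S).trans ?_
    exact Finset.sum_congr rfl fun ρ _ => by
      rw [LinearMap.map_smul, LinearMap.map_smul]
      exact congrArg (a ρ • ·) (actW_single Γ one ρ (-ρ))
  have key : ∑ ρ ∈ S, a ρ • (((ρ : F) - (one : F)) • Finsupp.single (one + ρ, -ρ) (1:F)
      + (((-ρ : Γ) : F) - (one : F)) • Finsupp.single (ρ, one + -ρ) (1:F))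
      = (0 : Γ × Γ →₀ F) := by
    rw [← expand, hv]
    exact map_zero (finsuppTensorFinsupp' F Γ Γ).toLinearMap
  have e1 : ∀ ρ : Γ, ((one + ρ, -ρ) = (σ, one - σ)) ↔ ρ = σ - one := by
    intro ρ
    constructor
    · intro h
      have h1' : one + ρ = σ := congrArg Prod.fst h
      exact eq_sub_of_add_eq' h1'
    · rintro rfl
      simp [add_sub_cancel, neg_sub]
  have e2 : ∀ ρ : Γ, ((ρ, one + -ρ) = (σ, one - σ)) ↔ ρ = σ := by
    intro ρ
    constructor
    · intro h; exact congrArg Prod.fst h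
    · rintro rfl; simp [sub_eq_add_neg]
  have hp := congrArg (fun f : Γ × Γ →₀ F => f (σ, one - σ)) key
  simp only [Finsupp.finset_sum_apply, Finsupp.smul_apply, Finsupp.add_apply,
    Finsupp.single_apply, e1, e2, Finsupp.coe_zero, Pi.zero_apply, smul_eq_mul,
    mul_ite, mul_one, mul_zero, mul_add, Finset.sum_add_distrib,
    Finset.sum_ite_eq'] at hp
  have hite : ∀ (ρ : Γ) (c : F), (if ρ ∈ S then a ρ * c else 0) = a ρ * c := by
    intro ρ c
    split_ifs with h
    · rfl
    · rw [hSa ρ h, zero_mul]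
  rw [hite, hite] at hp
  push_cast [hone] at hp
  linear_combination -hp
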